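/- arXiv:1308.3758 — 4 statements merged into one kernel-verified Lean document; each statement's English description precedes it below -/
import Mathlib

section
/- Let K = (k₁,...,k_d) be a row vector such that all eigenvalues of the companion-type matrix J_d + e_d·K have nonzero real parts of the same sign. Let c₀ be the minimum of |Re(λ)| over the eigenvalues λ. Then, with the convention k_{d+1} := 1, for every m = 0,...,d-1, one has |k_{d-m}| ≥ c₀·|k_{d-m+1}|·(d-m)/(m+1). -/
open Polynomial Multiset Finset

lemma my_esymm_cons (z : ℂ) (s : Multiset ℂ) (m : ℕ) :
    (z ::ₘ s).esymm (m+1) = s.esymm (m+1) + z * s.esymm m := by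
  simp only [Multiset.esymm, Multiset.powersetCard_cons, Multiset.map_add, Multiset.sum_add,
    Multiset.map_map, Function.comp_def, Multiset.prod_cons]
  rw [← Multiset.sum_map_mul_left]

lemma my_esymm_zero' (s : Multiset ℂ) : s.esymm 0 = 1 := by
  simp [Multiset.esymm]

lemma keyA (c : ℝ) (hc : 0 ≤ c) :
    ∀ s : Multiset ℂ, (∀ z ∈ s, c ≤ z.re) →
    (∀ z : ℂ, s.count ((starRingEnd ℂ) z) = s.count z) →
    ∀ m : ℕ, (s.esymm m).im = 0 ∧ 0 ≤ (s.esymm m).re ∧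
      c * ((Multiset.card s : ℝ) - m) * (s.esymm m).re ≤ (m+1) * (s.esymm (m+1)).re := by
  intro s
  induction s using Multiset.strongInductionOn with
  | ih s IH =>
  intro hre hconj
  by_cases hs0 : s = 0
  · subst hs0
    intro m
    match m with
    | 0 => refine ⟨by simp [my_esymm_zero'], by simp [my_esymm_zero'], ?_⟩
           simp [my_esymm_zero', Multiset.esymm, Multiset.powersetCard_zero_right]
    | (k+1) => refine ⟨by simp [Multiset.esymm, Multiset.powersetCard_zero_right], by simp [Multiset.esymm, Multiset.powersetCard_zero_right], ?_⟩
               simp [Multiset.esymm, Multiset.powersetCard_zero_right]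
  obtain ⟨z, hz⟩ := Multiset.exists_mem_of_ne_zero hs0
  by_cases him : z.im = 0
  · set t := s.erase z with ht
    have hst : s = z ::ₘ t := (Multiset.cons_erase hz).symm
    have htlt : t < s := Multiset.erase_lt.2 hz
    have htre : ∀ u ∈ t, c ≤ u.re := fun u hu => hre u (Multiset.mem_of_mem_erase hu)
    have hzz : (starRingEnd ℂ) z = z := Complex.conj_eq_iff_im.2 him
    have htconj : ∀ u : ℂ, t.count ((starRingEnd ℂ) u) = t.count u := by
      intro u
      by_cases huz : u = z
      · subst huz; rw [hzz]
      · have h2 : (starRingEnd ℂ) u ≠ z := by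
          intro h
          apply huz
          have := congrArg (starRingEnd ℂ) h
          rwa [Complex.conj_conj, hzz] at this
        rw [ht, Multiset.count_erase_of_ne h2, Multiset.count_erase_of_ne huz, hconj]
    have IHt := IH t htlt htre htconj
    set E : ℕ → ℝ := fun k => (t.esymm k).re with hE
    have him0 : ∀ k, (t.esymm k).im = 0 := fun k => (IHt k).1
    have hge : ∀ k, 0 ≤ E k := fun k => (IHt k).2.1
    have hineq : ∀ k : ℕ, c * ((Multiset.card t : ℝ) - k) * E k ≤ (k+1) * E (k+1) :=
      fun k => (IHt k).2.2
    set x := z.re with hx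
    have hxc : c ≤ x := hre z hz
    have hx0 : 0 ≤ x := le_trans hc hxc
    set N := ((Multiset.card t : ℕ) : ℝ) with hN
    have hcards : ((Multiset.card s : ℕ) : ℝ) = N + 1 := by
      rw [hst, Multiset.card_cons]; push_cast; ring
    have hEs : ∀ k : ℕ, (s.esymm (k+1)).re = E (k+1) + x * E k ∧ (s.esymm (k+1)).im = 0 := by
      intro k
      rw [hst, my_esymm_cons]
      constructor
      · simp [Complex.add_re, Complex.mul_re, him0 k]; rfl
      · simp [Complex.add_im, Complex.mul_im, him0 k, him0 (k+1), him]
    have hE0 : E 0 = 1 := by simp [hE, my_esymm_zero']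
    intro m
    match m with
    | 0 =>
      refine ⟨by rw [hst, my_esymm_zero']; simp, by rw [hst, my_esymm_zero']; simp, ?_⟩
      rw [hst, my_esymm_zero']
      rw [← hst, hcards, (hEs 0).1]
      have h1 := hineq 0
      rw [hE0] at h1 ⊢
      simp only [Complex.one_re, Nat.cast_zero]
      push_cast at h1 ⊢
      nlinarith [h1]
    | (k+1) =>
      refine ⟨(hEs k).2, by rw [(hEs k).1]; nlinarith [hge (k+1), mul_nonneg hx0 (hge k)], ?_⟩
      rw [hcards, (hEs k).1, (hEs (k+1)).1]
      have h1 := hineq (k+1)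
      have h3 : x * (c * (N - k) * E k) ≤ x * ((k+1) * E (k+1)) :=
        mul_le_mul_of_nonneg_left (hineq k) hx0
      have h2 : 0 ≤ (x - c) * E (k+1) := mul_nonneg (by linarith) (hge (k+1))
      push_cast at h1 h3 ⊢
      nlinarith [h1, h2, h3]
  · set w := (starRingEnd ℂ) z with hwdef
    have hwz : w ≠ z := by
      intro h; exact him (Complex.conj_eq_iff_im.1 h)
    have hw_mem : w ∈ s.erase z := by
      rw [Multiset.mem_erase_of_ne hwz]
      rw [← Multiset.count_pos, hconj, Multiset.count_pos]; exact hz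
    set t := (s.erase z).erase w with htdef
    have h1 : w ::ₘ t = s.erase z := Multiset.cons_erase hw_mem
    have hst : s = z ::ₘ w ::ₘ t := by
      rw [h1]; exact (Multiset.cons_erase hz).symm
    have htlt : t < s :=
      lt_trans (Multiset.erase_lt.2 hw_mem) (Multiset.erase_lt.2 hz)
    have htre : ∀ u ∈ t, c ≤ u.re := fun u hu =>
      hre u (Multiset.mem_of_mem_erase (Multiset.mem_of_mem_erase hu))
    have hcount : ∀ u : ℂ, s.count u
        = t.count u + ((if u = z then 1 else 0) + (if u = w then 1 else 0)) := by
      intro u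
      rw [hst, Multiset.count_cons, Multiset.count_cons]
      ring
    have htconj : ∀ u : ℂ, t.count ((starRingEnd ℂ) u) = t.count u := by
      intro u
      have e1 : ((starRingEnd ℂ) u = z) ↔ (u = w) := by
        constructor
        · intro h; rw [hwdef, ← h, Complex.conj_conj]
        · intro h; rw [h, hwdef, Complex.conj_conj]
      have e2 : ((starRingEnd ℂ) u = w) ↔ (u = z) := by
        rw [hwdef]
        constructor
        · intro h
          have := congrArg (starRingEnd ℂ) h
          rwa [Complex.conj_conj, Complex.conj_conj] at this
        · intro h; rw [h]
      have hcu := hconj u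
      rw [hcount u, hcount ((starRingEnd ℂ) u)] at hcu
      simp only [e1, e2] at hcu
      omega
    have IHt := IH t htlt htre htconj
    set E : ℕ → ℝ := fun k => (t.esymm k).re with hE
    have him0 : ∀ k, (t.esymm k).im = 0 := fun k => (IHt k).1
    have hge : ∀ k, 0 ≤ E k := fun k => (IHt k).2.1
    have hineq : ∀ k : ℕ, c * ((Multiset.card t : ℝ) - k) * E k ≤ (k+1) * E (k+1) :=
      fun k => (IHt k).2.2
    set b := 2 * z.re with hb
    set q := Complex.normSq z with hq
    have hzc : c ≤ z.re := hre z hz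
    have hb2c : 2*c ≤ b := by rw [hb]; linarith
    have hb0 : 0 ≤ b := by linarith
    have hq0 : 0 ≤ q := Complex.normSq_nonneg z
    have h2q : c * b ≤ 2 * q := by
      rw [hq, Complex.normSq_apply, hb]
      nlinarith [sq_nonneg z.im, mul_self_nonneg z.im, hzc, hc]
    set N := ((Multiset.card t : ℕ) : ℝ) with hN
    have hcards : ((Multiset.card s : ℕ) : ℝ) = N + 2 := by
      rw [hst, Multiset.card_cons, Multiset.card_cons]; push_cast; ring
    -- esymm expansions
    have hzw_add : z + w = (b : ℂ) := by
      rw [hwdef, hb]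
      apply Complex.ext <;> simp [Complex.add_re, Complex.add_im] <;> ring
    have hzw_mul : z * w = (q : ℂ) := by
      rw [hwdef, hq]; exact Complex.mul_conj z
    have hs1 : s.esymm 1 = t.esymm 1 + (b : ℂ) * t.esymm 0 := by
      rw [hst, my_esymm_cons, my_esymm_cons, my_esymm_zero', my_esymm_zero', ← hzw_add]
      ring
    have hsk : ∀ k : ℕ, s.esymm (k+2)
        = t.esymm (k+2) + (b:ℂ) * t.esymm (k+1) + (q:ℂ) * t.esymm k := by
      intro k
      rw [hst, my_esymm_cons, my_esymm_cons, my_esymm_cons, ← hzw_add, ← hzw_mul]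
      ring
    have hre1 : (s.esymm 1).re = E 1 + b ∧ (s.esymm 1).im = 0 := by
      rw [hs1, my_esymm_zero']
      constructor
      · simp [Complex.add_re, Complex.mul_re]; rfl
      · simp [Complex.add_im, Complex.mul_im, him0 1]
    have hrek : ∀ k : ℕ, (s.esymm (k+2)).re = E (k+2) + b * E (k+1) + q * E k ∧
        (s.esymm (k+2)).im = 0 := by
      intro k
      rw [hsk k]
      constructor
      · simp [Complex.add_re, Complex.mul_re, him0 k, him0 (k+1)]; rfl
      · simp [Complex.add_im, Complex.mul_im, him0 k, him0 (k+1), him0 (k+2)]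
    have hE0 : E 0 = 1 := by simp [hE, my_esymm_zero']
    intro m
    match m with
    | 0 =>
      refine ⟨by rw [hst, my_esymm_zero']; simp, by rw [hst, my_esymm_zero']; simp, ?_⟩
      rw [hst, my_esymm_zero', ← hst, hcards]
      show c * (N + 2 - (0:ℕ)) * (1:ℂ).re ≤ ((0:ℕ)+1) * (s.esymm 1).re
      rw [hre1.1]
      have h1 := hineq 0
      rw [hE0] at h1
      push_cast at h1 ⊢
      simp only [Complex.one_re]
      nlinarith [h1]
    | 1 =>
      refine ⟨hre1.2, by rw [hre1.1]; nlinarith [hge 1, hb0], ?_⟩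
      rw [hcards, hre1.1, (hrek 0).1]
      have h1 := hineq 1
      have h0 := hineq 0
      rw [hE0] at h0
      push_cast at h1 h0 ⊢
      -- need: c(N+1)(E1+b) ≤ 2(E2 + bE1 + qE0)  with E0=1
      rw [hE0]
      nlinarith [h1, h0, mul_nonneg (by linarith : (0:ℝ) ≤ b - 2*c) (by linarith : (0:ℝ) ≤ E 1 - c*N),
        mul_nonneg (mul_nonneg hc (by linarith : (0:ℝ) ≤ b - 2*c)) (Nat.cast_nonneg (Multiset.card t)),
        h2q]
    | (k+2) =>
      refine ⟨(hrek k).2, by rw [(hrek k).1]; nlinarith [hge k, hge (k+1), hge (k+2), hb0, hq0], ?_⟩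
      rw [hcards, (hrek k).1, (hrek (k+1)).1]
      have h1 := hineq (k+2)
      have h2 := hineq (k+1)
      have h3 := hineq k
      push_cast at h1 h2 h3 ⊢
      -- linear combination: H1 + 2c*slack2 + (b-2c)*slack2 + (b-2c)*E(k+2) + q*slack3 + (2q-cb)*E(k+1)
      have H2 : 0 ≤ c * (((k:ℝ)+1+1) * E (k+2) - c * (N - ((k:ℝ)+1)) * E (k+1)) :=
        mul_nonneg hc (by linarith)
      have H3 : 0 ≤ (b - 2*c) * (((k:ℝ)+1+1) * E (k+2) - c * (N - ((k:ℝ)+1)) * E (k+1)) :=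
        mul_nonneg (by linarith) (by linarith)
      have H4 : 0 ≤ (b - 2*c) * E (k+2) := mul_nonneg (by linarith) (hge (k+2))
      have H5 : 0 ≤ q * (((k:ℝ)+1) * E (k+1) - c * (N - (k:ℝ)) * E k) :=
        mul_nonneg hq0 (by linarith)
      have H6 : 0 ≤ (2*q - c*b) * E (k+1) := mul_nonneg (by linarith) (hge (k+1))
      linarith [h1, H2, H3, H4, H5, H6]

lemma keyB (c : ℝ) (hc : 0 ≤ c) (s : Multiset ℂ)
    (hre : ∀ z ∈ s, c ≤ z.re)
    (hconj : ∀ z : ℂ, s.count ((starRingEnd ℂ) z) = s.count z) (m : ℕ) :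
    c * ‖s.esymm m‖ * ((Multiset.card s : ℝ) - m) / (m+1)
      ≤ ‖s.esymm (m+1)‖ := by
  obtain ⟨h1, h2, h3⟩ := keyA c hc s hre hconj m
  obtain ⟨h1', h2', -⟩ := keyA c hc s hre hconj (m+1)
  have habs : ∀ k : ℕ, (s.esymm k).im = 0 → 0 ≤ (s.esymm k).re →
      ‖s.esymm k‖ = (s.esymm k).re := by
    intro k hk1 hk2
    have hk : s.esymm k = (((s.esymm k).re : ℝ) : ℂ) := Complex.ext (by simp) (by simp [hk1])
    rw [hk, Complex.norm_real, Real.norm_eq_abs, _root_.abs_of_nonneg hk2, Complex.ofReal_re]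
  rw [habs m h1 h2, habs (m+1) h1' h2']
  rw [div_le_iff₀ (by positivity)]
  nlinarith [h3]

noncomputable def compMat (R : Type*) [CommRing R] (d : ℕ) (K : ℕ → R) : Matrix (Fin d) (Fin d) R[X] :=
  Matrix.of fun i j => (if (i:ℕ) = (j:ℕ) then (X:R[X]) else 0) -
     ((if (j:ℕ) = (i:ℕ)+1 then 1 else 0) + (if (i:ℕ) = d - 1 then C (K ((j:ℕ)+1)) else 0))

lemma compMat_det (R : Type*) [CommRing R] :
    ∀ (d : ℕ) (K : ℕ → R), (compMat R (d+1) K).det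
      = X^(d+1) - ∑ j ∈ Finset.range (d+1), C (K (j+1)) * X^j := by
  intro d
  induction d with
  | zero =>
    intro K
    rw [show (compMat R 1 K).det = compMat R 1 K 0 0 from Matrix.det_fin_one _]
    simp [compMat]
  | succ d IH =>
    intro K
    have hdet := Matrix.det_succ_column_zero (compMat R (d+2) K)
    set f : Fin (d+2) → R[X] := fun i =>
      (-1)^(i:ℕ) * compMat R (d+2) K i 0 *
        ((compMat R (d+2) K).submatrix i.succAbove Fin.succ).det with hf
    have hsplit : ∑ i : Fin (d+2), f i = f 0 + ∑ i ∈ Finset.univ.erase 0, f i :=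
      (Finset.add_sum_erase _ f (Finset.mem_univ 0)).symm
    have hlast : ∑ i ∈ Finset.univ.erase 0, f i = f (Fin.last (d+1)) := by
      apply Finset.sum_eq_single_of_mem
      · rw [Finset.mem_erase]
        exact ⟨by simp [Fin.ext_iff], Finset.mem_univ _⟩
      · intro b hb hbne
        have hb0 : (b:ℕ) ≠ 0 := by
          exact fun h => (Finset.mem_erase.1 hb).1 (Fin.ext h)
        have hbl : (b:ℕ) ≠ d+1 := by
          simpa [Fin.ext_iff, Fin.val_last] using hbne
        have : compMat R (d+2) K b 0 = 0 := by
          simp [compMat, hb0, hbl]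
        rw [hf]; simp [this]
    -- first term
    have h00 : compMat R (d+2) K 0 0 = X := by simp [compMat]
    have hsub0 : (compMat R (d+2) K).submatrix (Fin.succAbove 0) Fin.succ
        = compMat R (d+1) (fun n => K (n+1)) := by
      ext i j
      simp only [compMat, Matrix.submatrix_apply, Fin.succAbove_zero, Matrix.of_apply,
        Fin.val_succ]
      have e1 : ((i:ℕ)+1 = (j:ℕ)+1) ↔ ((i:ℕ) = (j:ℕ)) := by omega
      have e2 : ((j:ℕ)+1 = (i:ℕ)+1+1) ↔ ((j:ℕ) = (i:ℕ)+1) := by omega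
      have e3 : ((i:ℕ)+1 = d+2-1) ↔ ((i:ℕ) = d+1-1) := by omega
      rw [if_congr e1 rfl rfl, if_congr e2 rfl rfl, if_congr e3 rfl rfl]
    have hf0 : f 0 = X * (X^(d+1) - ∑ j ∈ Finset.range (d+1), C (K (j+2)) * X^j) := by
      rw [hf]
      simp only [Fin.val_zero, pow_zero, one_mul, h00]
      rw [hsub0, IH (fun n => K (n+1))]
    -- last term
    have hlastval : compMat R (d+2) K (Fin.last (d+1)) 0 = - C (K 1) := by
      simp [compMat, Fin.val_last]
    have hsubL : ((compMat R (d+2) K).submatrix (Fin.last (d+1)).succAbove Fin.succ).det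
        = (-1)^(d+1) := by
      have htri : ((compMat R (d+2) K).submatrix (Fin.last (d+1)).succAbove Fin.succ).BlockTriangular OrderDual.toDual := by
        intro i j hij
        have hij' : (i:ℕ) < (j:ℕ) := hij
        simp only [compMat, Matrix.submatrix_apply, Fin.succAbove_last, Matrix.of_apply,
          Fin.val_succ, Fin.coe_castSucc]
        have : ¬ ((i:ℕ) = (j:ℕ)+1) := by omega
        have h2 : ¬ ((j:ℕ)+1 = (i:ℕ)+1) := by omega
        have h3 : ¬ ((i:ℕ) = d+1) := by omega
        have h4 : ¬ ((j:ℕ) = (i:ℕ)) := by omega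
        simp [this, h2, h3, h4]
      rw [Matrix.det_of_lowerTriangular _ htri]
      have : ∀ i : Fin (d+1), ((compMat R (d+2) K).submatrix (Fin.last (d+1)).succAbove Fin.succ) i i = -1 := by
        intro i
        simp only [compMat, Matrix.submatrix_apply, Fin.succAbove_last, Matrix.of_apply,
          Fin.val_succ, Fin.coe_castSucc]
        have h1 : ¬ ((i:ℕ) = (i:ℕ)+1) := by omega
        have h3 : ¬ ((i:ℕ) = d+1) := by omega
        simp [h1, h3]
      rw [Finset.prod_congr rfl (fun i _ => this i)]
      simp
    have hfL : f (Fin.last (d+1)) = - C (K 1) := by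
      rw [hf]
      simp only [Fin.val_last, hlastval, hsubL]
      rw [show (-1:R[X])^(d+1) * (- C (K 1)) * (-1)^(d+1)
            = - C (K 1) * ((-1)^(d+1) * (-1)^(d+1)) by ring,
          ← pow_add, Even.neg_one_pow ⟨d+1, by ring⟩, mul_one]
    rw [hdet, hsplit, hlast, hf0, hfL]
    rw [Finset.sum_range_succ' (fun j => C (K (j+1)) * X^j) (d+1)]
    have hsum : X * ∑ j ∈ Finset.range (d+1), C (K (j+2)) * X^j
        = ∑ j ∈ Finset.range (d+1), C (K (j+1+1)) * X^(j+1) := by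
      rw [Finset.mul_sum]; exact Finset.sum_congr rfl fun j _ => by ring
    rw [mul_sub, hsum]
    simp only [pow_zero, mul_one]
    ring

lemma companion_charpoly {e : ℕ} (K : ℕ → ℝ)
    (M : Matrix (Fin (e+1)) (Fin (e+1)) ℝ)
    (hM : M = Matrix.of fun i j : Fin (e+1) =>
      (if (j : ℕ) = (i : ℕ) + 1 then (1 : ℝ) else 0) +
      (if (i : ℕ) = (e+1) - 1 then K ((j : ℕ) + 1) else 0)) :
    M.charpoly = X^(e+1) - ∑ j ∈ Finset.range (e+1), C (K (j+1)) * X^j := by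
  have hcm : Matrix.charmatrix M = compMat ℝ (e+1) K := by
    refine Matrix.ext fun i j => ?_
    rw [Matrix.charmatrix_apply, hM]
    simp only [compMat, Matrix.of_apply, Matrix.diagonal_apply, map_add, apply_ite C, C_1, C_0,
      Fin.ext_iff]
    rw [_root_.map_add, apply_ite C, apply_ite C, C_1, C_0]
  show (Matrix.charmatrix M).det = _
  rw [hcm, compMat_det]

/-- Let `K = (k₁,…,k_d)` be the last row of the companion-type matrix `J_d + e_d K`
(ones on the superdiagonal, `K` added as last row).  If all eigenvalues have nonzero real
parts of the same sign and `c₀` bounds `|Re λ|` from below (in particular for `c₀` the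
minimum of `|Re λ|`), then with the convention `k_{d+1} := 1`, for every `m = 0,…,d-1` one
has `|k_{d-m}| ≥ c₀ |k_{d-m+1}| (d-m)/(m+1)`. -/
theorem companion_coeff_bounds {d : ℕ} (hd : 0 < d) (K : ℕ → ℝ) (hK : K (d + 1) = 1)
    (M : Matrix (Fin d) (Fin d) ℝ)
    (hM : M = Matrix.of fun i j : Fin d =>
      (if (j : ℕ) = (i : ℕ) + 1 then (1 : ℝ) else 0) +
      (if (i : ℕ) = d - 1 then K ((j : ℕ) + 1) else 0))
    (c₀ : ℝ)
    (hroots : (∀ z ∈ ((M.map (Complex.ofReal)).charpoly).roots, 0 < z.re) ∨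
              (∀ z ∈ ((M.map (Complex.ofReal)).charpoly).roots, z.re < 0))
    (hc₀ : ∀ z ∈ ((M.map (Complex.ofReal)).charpoly).roots, c₀ ≤ |z.re|) :
    ∀ m : ℕ, m < d →
      c₀ * |K (d - m + 1)| * (d - m) / (m + 1) ≤ |K (d - m)| := by
  intro m hm
  rcases le_or_gt c₀ 0 with hcneg | hc
  · have hdm : (0:ℝ) ≤ (d:ℝ) - (m:ℝ) := by
      have : (m:ℝ) ≤ (d:ℝ) := by exact_mod_cast hm.le
      linarith
    have h2 : 0 ≤ |K (d - m + 1)| * ((d:ℝ) - (m:ℝ)) :=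
      mul_nonneg (abs_nonneg _) hdm
    have h1 : c₀ * |K (d - m + 1)| * ((d:ℝ) - (m:ℝ)) ≤ 0 := by nlinarith
    have h3 : c₀ * |K (d - m + 1)| * ((d:ℝ) - (m:ℝ)) / (m + 1) ≤ 0 :=
      div_nonpos_of_nonpos_of_nonneg h1 (by positivity)
    exact h3.trans (abs_nonneg _)
  obtain ⟨e, rfl⟩ : ∃ e, d = e + 1 := ⟨d - 1, by omega⟩
  have hchar := companion_charpoly K M hM
  have hpc : ∀ j, j < e + 1 → M.charpoly.coeff j = -K (j+1) := by
    intro j hj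
    rw [hchar, coeff_sub, coeff_X_pow, if_neg (by omega), finset_sum_coeff]
    rw [Finset.sum_eq_single j]
    · simp [coeff_C_mul, coeff_X_pow]
    · intro b _ hbj
      simp [coeff_C_mul, coeff_X_pow, Ne.symm hbj]
    · intro h
      exact absurd (Finset.mem_range.2 hj) h
  set P := (M.map Complex.ofReal).charpoly with hPdef
  have hmapeq : P = M.charpoly.map (algebraMap ℝ ℂ) := by
    rw [hPdef, show (M.map Complex.ofReal) = M.map ⇑(algebraMap ℝ ℂ) from rfl]
    exact Matrix.charpoly_map M (algebraMap ℝ ℂ)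
  have hmonic : P.Monic := Matrix.charpoly_monic _
  have hPdeg : P.natDegree = e + 1 := by
    rw [hmapeq, (Matrix.charpoly_monic M).natDegree_map]
    simpa using Matrix.charpoly_natDegree_eq_dim M
  set s₀ := P.roots with hs₀
  have hsplits : P.Splits := IsAlgClosed.splits P
  have hcard : Multiset.card s₀ = e + 1 :=
    (splits_iff_card_roots.mp hsplits).trans hPdeg
  have hcoeff : ∀ j, j ≤ e + 1 → P.coeff j = (-1)^(e+1-j) * s₀.esymm (e+1-j) := by
    intro j hj
    have h := Polynomial.coeff_eq_esymm_roots_of_card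
      (p := P) (hcard.trans hPdeg.symm) (k := j) (hPdeg.symm ▸ hj)
    rw [hmonic.leadingCoeff, hPdeg] at h
    simpa using h
  have hPconjmap : P.map (starRingEnd ℂ) = P := by
    rw [hmapeq, Polynomial.map_map]
    congr 1
    exact RingHom.ext fun x => Complex.conj_ofReal x
  have hroots_conj : s₀.map (starRingEnd ℂ) = s₀ := by
    conv_rhs => rw [hs₀, ← hPconjmap]
    exact Polynomial.roots_map_of_injective_of_card_eq_natDegree (starRingEnd ℂ).injective (hcard.trans hPdeg.symm)
  have hcnt : ∀ z : ℂ, s₀.count ((starRingEnd ℂ) z) = s₀.count z := by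
    intro z
    conv_lhs => rw [← hroots_conj]
    exact Multiset.count_map_eq_count' _ _ (RingHom.injective _) z
  have hKabs : ∀ j, j < e + 1 → |K (j+1)| = ‖s₀.esymm (e+1-j)‖ := by
    intro j hj
    have h1 : P.coeff j = ((M.charpoly.coeff j : ℝ) : ℂ) := by
      rw [hmapeq, coeff_map]; rfl
    rw [hcoeff j hj.le, hpc j hj] at h1
    calc |K (j+1)| = ‖((-K (j+1) : ℝ) : ℂ)‖ := by
          rw [Complex.norm_real, Real.norm_eq_abs, abs_neg]
      _ = ‖(-1)^(e+1-j) * s₀.esymm (e+1-j)‖ := by rw [← h1]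
      _ = ‖s₀.esymm (e+1-j)‖ := by
          rw [norm_mul, norm_pow]
          simp
  -- main inequality for s₀
  have main : c₀ * ‖s₀.esymm m‖ * (((e+1 : ℕ) : ℝ) - m) / (m+1)
      ≤ ‖s₀.esymm (m+1)‖ := by
    rcases hroots with hpos | hneg
    · have hre : ∀ z ∈ s₀, c₀ ≤ z.re := by
        intro z hz
        have h1 := hc₀ z hz
        rwa [abs_of_pos (hpos z hz)] at h1
      have := keyB c₀ hc.le s₀ hre hcnt m
      rwa [hcard] at this
    · set s := s₀.map (fun z : ℂ => -z) with hsdef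
      have hre : ∀ z ∈ s, c₀ ≤ z.re := by
        intro z hz
        obtain ⟨w, hw, rfl⟩ := Multiset.mem_map.1 hz
        have h1 := hc₀ w hw
        rw [abs_of_neg (hneg w hw)] at h1
        simpa using h1
      have hcnt' : ∀ z : ℂ, s.count ((starRingEnd ℂ) z) = s.count z := by
        intro z
        have hinj : Function.Injective (fun z : ℂ => -z) := fun a b h => by
          simpa using h
        have h1 : ∀ u : ℂ, s.count (-u) = s₀.count u := fun u =>
          Multiset.count_map_eq_count' _ _ hinj u
        have e1 : (starRingEnd ℂ) z = -((starRingEnd ℂ) (-z)) := by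
          rw [map_neg, neg_neg]
        have e2 : z = -(-z) := by rw [neg_neg]
        rw [e1, h1, hcnt]
        conv_rhs => rw [e2, h1]
      have hcards : Multiset.card s = e + 1 := by
        rw [hsdef, Multiset.card_map, hcard]
      have habs : ∀ k, ‖s.esymm k‖ = ‖s₀.esymm k‖ := by
        intro k
        rw [hsdef, show (fun z : ℂ => -z) = (Neg.neg : ℂ → ℂ) from rfl,
          Multiset.esymm_neg, norm_mul, norm_pow]
        simp
      have := keyB c₀ hc.le s hre hcnt' m
      rwa [hcards, habs m, habs (m+1)] at this
  have hm' : m ≤ e := by omega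
  have hK1 : |K (e + 1 - m)| = ‖s₀.esymm (m+1)‖ := by
    have h := hKabs (e - m) (by omega)
    rw [show e - m + 1 = e + 1 - m by omega, show e + 1 - (e - m) = m + 1 by omega] at h
    exact h
  have hK2 : |K (e + 1 - m + 1)| = ‖s₀.esymm m‖ := by
    rcases Nat.eq_zero_or_pos m with rfl | hm0
    · rw [show e + 1 - 0 + 1 = e + 1 + 1 by omega, hK, my_esymm_zero' s₀]
      simp
    · have h := hKabs (e + 1 - m) (by omega)
      rw [show e + 1 - m + 1 = e + 1 - m + 1 from rfl, show e + 1 - (e + 1 - m) = m by omega] at h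
      exact h
  rw [hK1, hK2]
  exact_mod_cast main
end

section
/- The set of periodic (T,μ)-signals is dense in 𝒢(T,μ) for the weak-* topology of L^∞(ℝ,ℝ) (as dual of L¹): for every α ∈ 𝒢(T,μ), every y ∈ L¹(ℝ,ℝ) and every ε > 0, there exists a periodic signal β ∈ 𝒢(T,μ) with |∫ y(β - α)| < ε. -/
open MeasureTheory

private lemma bdd_intervalIntegrable {g : ℝ → ℝ} (hg : Measurable g)
    (hb : ∀ x, g x ∈ Set.Icc (0 : ℝ) 1) (a b : ℝ) :
    IntervalIntegrable g MeasureTheory.volume a b := by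
  refine (intervalIntegrable_const (c := (1:ℝ))).mono_fun' hg.aestronglyMeasurable.restrict ?_
  filter_upwards with x
  have := hb x
  rw [Real.norm_eq_abs, abs_of_nonneg this.1]
  exact this.2

/-- The periodic `(T,μ)`-signals are weak-* dense in the class `𝒢(T,μ)` of persistently
exciting signals: for every `(T,μ)`-signal `α`, every `y ∈ L¹(ℝ)` and every `ε > 0` there
is a periodic `(T,μ)`-signal `β` with `|∫ y (β - α)| < ε`. -/
theorem periodic_PE_signals_weakStar_dense (T μ : ℝ) (hμ : 0 < μ) (hμT : μ ≤ T)
    (α : ℝ → ℝ) (hαm : Measurable α) (hα01 : ∀ t, α t ∈ Set.Icc (0 : ℝ) 1)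
    (hαPE : ∀ t : ℝ, μ ≤ ∫ s in t..t + T, α s)
    (y : ℝ → ℝ) (hy : Integrable y) (ε : ℝ) (hε : 0 < ε) :
    ∃ β : ℝ → ℝ, Measurable β ∧ (∀ t, β t ∈ Set.Icc (0 : ℝ) 1) ∧
      (∀ t : ℝ, μ ≤ ∫ s in t..t + T, β s) ∧
      (∃ τ > 0, Function.Periodic β τ) ∧
      |∫ t, y t * (β t - α t)| < ε := by
  have hT : 0 < T := lt_of_lt_of_le hμ hμT
  -- Step 1: choose `k ≥ T` with small tail of `|y|` outside `[-k, k]`.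
  obtain ⟨k, hTk, htail⟩ : ∃ k : ℝ, T ≤ k ∧ ∫ t in (Set.Icc (-k) k)ᶜ, |y t| < ε := by
    have hya : Integrable (fun t => |y t|) := hy.abs
    set s : ℕ → Set ℝ := fun n => Set.Icc (-(T + n)) (T + n) with hs
    have hsm : ∀ n, MeasurableSet (s n) := fun _ => measurableSet_Icc
    have hmono : Monotone s := by
      intro m n hmn
      have : (m : ℝ) ≤ n := by exact_mod_cast hmn
      exact Set.Icc_subset_Icc (by linarith) (by linarith)
    have hunion : (⋃ n, s n) = Set.univ := by
      ext x
      simp only [Set.mem_iUnion, Set.mem_univ, iff_true, hs, Set.mem_Icc]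
      obtain ⟨n, hn⟩ := exists_nat_ge |x|
      exact ⟨n, by constructor <;> nlinarith [le_abs_self x, neg_abs_le x]⟩
    have htend := tendsto_setIntegral_of_monotone hsm hmono
      (by rw [hunion]; exact hya.integrableOn)
    rw [hunion, MeasureTheory.setIntegral_univ] at htend
    have hev : ∀ᶠ n : ℕ in Filter.atTop,
        (∫ t, |y t|) - ε < ∫ t in s n, |y t| :=
      htend.eventually (eventually_gt_nhds (by linarith))
    obtain ⟨n, hn⟩ := hev.exists
    refine ⟨T + n, by simpa using (Nat.cast_nonneg n : (0:ℝ) ≤ n), ?_⟩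
    have hsplit := MeasureTheory.integral_add_compl (hsm n) hya
    have : ∫ t in (s n)ᶜ, |y t| < ε := by linarith
    simpa [hs] using this
  have hk0 : 0 < k := hT.trans_le hTk
  set L : ℝ := k + T with hLdef
  have hL : 0 < L := by positivity
  have hp : (0:ℝ) < 2 * L := by positivity
  set f : ℝ → ℝ := fun t => toIcoMod hp (-L) t with hfdef
  have hfmem : ∀ t, f t ∈ Set.Ico (-L) L := by
    intro t
    have := toIcoMod_mem_Ico hp (-L) t
    rwa [show -L + 2 * L = L by ring] at this
  have hfself : ∀ t, t ∈ Set.Ico (-L) L → f t = t := by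
    intro t ht
    exact (toIcoMod_eq_self hp).2 (by rwa [show -L + 2 * L = L by ring])
  have hfm : Measurable f := by
    have : f = fun t => t - (⌊(t - (-L)) / (2 * L)⌋ : ℝ) * (2 * L) := by
      funext t
      rw [hfdef]
      simp only [toIcoMod, toIcoDiv_eq_floor, zsmul_eq_mul]
    rw [this]
    have h1 : Measurable fun t : ℝ => (⌊(t - (-L)) / (2 * L)⌋ : ℤ) :=
      Int.measurable_floor.comp ((measurable_id.sub measurable_const).div_const _)
    have h2 : Measurable fun t : ℝ => ((⌊(t - (-L)) / (2 * L)⌋ : ℤ) : ℝ) :=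
      measurable_from_top.comp h1
    exact measurable_id.sub (h2.mul_const _)
  set β : ℝ → ℝ := fun t => if f t ∈ Set.Icc (-k) k then α (f t) else 1 with hβdef
  have hβm : Measurable β := by
    exact Measurable.ite (hfm (measurableSet_Icc)) (hαm.comp hfm) measurable_const
  have hβeqα : ∀ t, f t ∈ Set.Icc (-k) k → β t = α (f t) := fun t h => if_pos h
  have hβeq1 : ∀ t, f t ∉ Set.Icc (-k) k → β t = 1 := fun t h => if_neg h
  have hβ01 : ∀ t, β t ∈ Set.Icc (0:ℝ) 1 := by
    intro t
    by_cases h : f t ∈ Set.Icc (-k) k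
    · rw [hβeqα t h]; exact hα01 _
    · rw [hβeq1 t h]; exact ⟨zero_le_one, le_rfl⟩
  have hβper : Function.Periodic β (2 * L) := by
    intro t
    simp only [hβdef, hfdef, toIcoMod_add_right]
  -- β = α on [-k, k]
  have hβα : ∀ t ∈ Set.Icc (-k) k, β t = α t := by
    intro t ht
    have hft : f t = t := hfself t ⟨by linarith [ht.1], by linarith [ht.2]⟩
    rw [hβeqα t (by rw [hft]; exact ht), hft]
  -- β ≥ α on [-L, L]
  have hβge : ∀ t ∈ Set.Icc (-L) L, α t ≤ β t := by
    intro t ht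
    rcases lt_or_eq_of_le ht.2 with h | h
    · have hft : f t = t := hfself t ⟨ht.1, h⟩
      by_cases hm : f t ∈ Set.Icc (-k) k
      · rw [hβeqα t hm, hft]
      · rw [hβeq1 t hm]; exact (hα01 t).2
    · -- t = L
      have hfL : f t = -L := by
        have ht2 : t = -L + 2 * L := by rw [← h]; ring
        show toIcoMod hp (-L) t = -L
        rw [ht2, toIcoMod_add_right, toIcoMod_apply_left]
      have hm : f t ∉ Set.Icc (-k) k := by
        rw [hfL]
        intro hc
        rw [Set.mem_Icc] at hc
        linarith [hc.1]
      rw [hβeq1 t hm]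
      exact (hα01 t).2
  -- persistence of excitation for β
  have hβPE : ∀ t : ℝ, μ ≤ ∫ s in t..t + T, β s := by
    intro t
    set n : ℤ := toIcoDiv hp (-L) t with hndef
    have ht' : t - f t = n • (2 * L) := self_sub_toIcoMod hp (-L) t
    set t' : ℝ := f t with ht'def
    have hteq : t = t' + (n : ℝ) * (2 * L) := by
      have := ht'
      push_cast [zsmul_eq_mul] at this
      linarith
    have hshift : (∫ s in t..t + T, β s) = ∫ s in t'..t' + T, β s := by
      have h1 : ∀ x, β (x + (n : ℝ) * (2 * L)) = β x := by
        intro x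
        simpa [mul_comm] using (hβper.int_mul n) x
      calc (∫ s in t..t + T, β s)
          = ∫ s in t' + (n:ℝ)*(2*L)..t' + T + (n:ℝ)*(2*L), β s := by
            rw [hteq]; ring_nf
        _ = ∫ s in t'..t' + T, β (s + (n:ℝ)*(2*L)) := by
            rw [intervalIntegral.integral_comp_add_right]
        _ = ∫ s in t'..t' + T, β s := by
            simp only [h1]
    rw [hshift]
    have htmem := hfmem t
    rcases le_or_gt t' k with hcase | hcase
    · -- window inside [-L, L]: β ≥ α there
      have hle : (∫ s in t'..t' + T, α s) ≤ ∫ s in t'..t' + T, β s := by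
        apply intervalIntegral.integral_mono_on (by linarith)
          (bdd_intervalIntegrable hαm hα01 _ _) (bdd_intervalIntegrable hβm hβ01 _ _)
        intro x hx
        apply hβge
        constructor
        · linarith [hx.1, htmem.1]
        · have : t' + T ≤ L := by linarith [hLdef.ge, hLdef.le]
          linarith [hx.2]
      linarith [hαPE t']
    · -- window in the padding: β = 1 there
      have hone : ∀ x ∈ Set.Icc t' (t' + T), β x = 1 := by
        intro x hx
        have hxk : k < x := lt_of_lt_of_le hcase hx.1
        have hxu : x < 2 * L - k := by
          have h1 : t' < L := htmem.2
          have h2 : x ≤ t' + T := hx.2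
          have h3 : L = k + T := hLdef
          linarith
        by_cases hxL : x < L
        · have hfx : f x = x := hfself x ⟨by linarith, hxL⟩
          refine hβeq1 x ?_
          rw [hfx]; intro hc; exact absurd hc.2 (not_le.mpr hxk)
        · -- L ≤ x < 2L - k : f x = x - 2L ∈ [-L, -k)
          push_neg at hxL
          have hfx : f x = x - 2 * L := by
            show toIcoMod hp (-L) x = x - 2 * L
            have e1 := toIcoMod_add_right hp (-L) (x - 2 * L)
            rw [show x - 2 * L + 2 * L = x by ring] at e1
            rw [e1]
            exact (toIcoMod_eq_self hp).2 (Set.mem_Ico.mpr ⟨by linarith, by linarith⟩)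
          refine hβeq1 x ?_
          rw [hfx]; intro hc
          rw [Set.mem_Icc] at hc
          linarith [hc.1]
      have : (∫ s in t'..t' + T, β s) = ∫ s in t'..t' + T, (1:ℝ) := by
        apply intervalIntegral.integral_congr
        intro x hx
        rw [Set.uIcc_of_le (by linarith)] at hx
        exact hone x hx
      rw [this]
      simp only [intervalIntegral.integral_const, smul_eq_mul, mul_one]
      linarith
  refine ⟨β, hβm, hβ01, hβPE, ⟨2 * L, hp, hβper⟩, ?_⟩
  -- the integral estimate
  have hδb : ∀ t, |β t - α t| ≤ 1 := by
    intro t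
    have h1 := hβ01 t
    have h2 := hα01 t
    rw [abs_le]
    constructor <;> [linarith [h1.1, h2.2]; linarith [h1.2, h2.1]]
  have hint : Integrable (fun t => y t * (β t - α t)) := by
    have := hy.bdd_mul ((hβm.sub hαm).aestronglyMeasurable)
      (c := 1) (Filter.Eventually.of_forall fun x => by rw [Real.norm_eq_abs]; exact hδb x)
    simpa [mul_comm] using this
  have habs : |∫ t, y t * (β t - α t)| ≤ ∫ t, |y t * (β t - α t)| := by
    have := norm_integral_le_integral_norm (μ := volume) (fun t => y t * (β t - α t))
    simpa only [Real.norm_eq_abs] using this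
  have hle2 : (∫ t, |y t * (β t - α t)|) ≤ ∫ t, ((Set.Icc (-k) k)ᶜ).indicator (fun t => |y t|) t := by
    apply integral_mono hint.abs
    · exact (hy.abs.indicator measurableSet_Icc.compl)
    · intro t
      show |y t * (β t - α t)| ≤ _
      by_cases ht : t ∈ Set.Icc (-k) k
      · have : β t = α t := hβα t ht
        simp [this, Set.indicator_of_notMem (by simpa using ht : t ∉ (Set.Icc (-k) k)ᶜ)]
      · rw [Set.indicator_of_mem (by simpa using ht) (fun t => |y t|)]
        rw [abs_mul]
        calc |y t| * |β t - α t| ≤ |y t| * 1 :=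
              mul_le_mul_of_nonneg_left (hδb t) (abs_nonneg _)
          _ = |y t| := mul_one _
  have hind : (∫ t, ((Set.Icc (-k) k)ᶜ).indicator (fun t => |y t|) t)
      = ∫ t in (Set.Icc (-k) k)ᶜ, |y t| :=
    integral_indicator measurableSet_Icc.compl
  calc |∫ t, y t * (β t - α t)| ≤ ∫ t, |y t * (β t - α t)| := habs
    _ ≤ _ := hle2
    _ = ∫ t in (Set.Icc (-k) k)ᶜ, |y t| := hind
    _ < ε := htail
end

section
/- If the Lie algebra generated by the projected vector fields ΠA and Π(BK) spans the full tangent space of ℝP^{d-1} at every point for some K₀, and if iterated Lie bracket expressions depend polynomially on K, then the set of K for which this holds is the complement of the zero set of a nonzero polynomial map, hence dense: concretely, if Lie(A - (Tr A/d)Id, BK₀ - (Tr(BK₀)/d)Id) = sl(d,ℝ) for some K₀, then the set of K with Lie(A - (Tr A/d)Id, BK - (Tr(BK)/d)Id) = sl(d,ℝ) is dense (indeed, Zariski-open and nonempty) in M_{m,d}(ℝ). -/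
section
attribute [local instance 100] LieRing.ofAssociativeRing
variable {d m : ℕ}

/-- The traceless part `M - (Tr M / d) Id` of a square matrix. -/
noncomputable def tracelessPart (d : ℕ) (M : Matrix (Fin d) (Fin d) ℝ) :
    Matrix (Fin d) (Fin d) ℝ :=
  M - (M.trace / (d : ℝ)) • (1 : Matrix (Fin d) (Fin d) ℝ)

/-- `K ∈ LARC₀(A,B)`: the Lie algebra generated by the traceless parts of `A` and `BK` is
all of `sl(d,ℝ)`, i.e. consists exactly of the traceless matrices. -/
noncomputable def MemLARC0 (A : Matrix (Fin d) (Fin d) ℝ) (B : Matrix (Fin d) (Fin m) ℝ)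
    (K : Matrix (Fin m) (Fin d) ℝ) : Prop :=
  ∀ M : Matrix (Fin d) (Fin d) ℝ,
    M ∈ LieSubalgebra.lieSpan ℝ (Matrix (Fin d) (Fin d) ℝ)
      {tracelessPart d A, tracelessPart d (B * K)} ↔ M.trace = 0

open Matrix Submodule Polynomial

namespace LARCAux

variable {d m : ℕ}

abbrev L (d : ℕ) := Matrix (Fin d) (Fin d) ℝ

/-! ### Bracket words -/

inductive W | x | y | br (a b : W)

noncomputable def evalW (X Y : L d) : W → L d
  | .x => X
  | .y => Y
  | .br a b => ⁅evalW X Y a, evalW X Y b⁆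

theorem lieSpan_eq_span (X Y : L d) (M : L d) :
    M ∈ LieSubalgebra.lieSpan ℝ (L d) {X, Y} ↔
      M ∈ span ℝ (Set.range (evalW X Y)) := by
  set P := span ℝ (Set.range (evalW X Y)) with hP
  have hbr : ∀ a ∈ P, ∀ b ∈ P, ⁅a, b⁆ ∈ P := by
    intro a ha b hb
    induction ha, hb using span_induction₂ with
    | mem_mem u v hu hv =>
      obtain ⟨wu, rfl⟩ := hu; obtain ⟨wv, rfl⟩ := hv
      exact subset_span ⟨W.br wu wv, rfl⟩
    | zero_left v hv => simp
    | zero_right u hu => simp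
    | add_left u v w hu hv hw h1 h2 => rw [add_lie]; exact add_mem h1 h2
    | add_right u v w hu hv hw h1 h2 => rw [lie_add]; exact add_mem h1 h2
    | smul_left r u v hu hv h => rw [smul_lie]; exact smul_mem _ _ h
    | smul_right r u v hu hv h => rw [lie_smul]; exact smul_mem _ _ h
  let Q : LieSubalgebra ℝ (L d) := { P with lie_mem' := fun {a b} ha hb => hbr a ha b hb }
  constructor
  · intro hM
    have hle : LieSubalgebra.lieSpan ℝ (L d) {X, Y} ≤ Q := by
      rw [LieSubalgebra.lieSpan_le]
      intro z hz
      rcases hz with rfl | rfl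
      · exact subset_span ⟨W.x, rfl⟩
      · exact subset_span ⟨W.y, rfl⟩
    exact hle hM
  · intro hM
    have : ∀ z ∈ (Set.range (evalW X Y)),
        z ∈ LieSubalgebra.lieSpan ℝ (L d) {X, Y} := by
      rintro z ⟨w, rfl⟩
      induction w with
      | x => exact LieSubalgebra.subset_lieSpan (by left; rfl)
      | y => exact LieSubalgebra.subset_lieSpan (by right; rfl)
      | br a b iha ihb => exact (LieSubalgebra.lieSpan ℝ (L d) _).lie_mem iha ihb
    exact span_le.mpr this hM

/-! ### sl(d) and traceless facts -/

noncomputable def sl (d : ℕ) : Submodule ℝ (L d) :=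
  LinearMap.ker (Matrix.traceLinearMap (Fin d) ℝ ℝ)

theorem mem_sl {M : L d} : M ∈ sl d ↔ M.trace = 0 := Iff.rfl

theorem trace_tracelessPart (hd : d ≠ 0) (M : L d) :
    (tracelessPart d M).trace = 0 := by
  rw [tracelessPart, trace_sub, trace_smul, trace_one, Fintype.card_fin, smul_eq_mul]
  have : (d : ℝ) ≠ 0 := Nat.cast_ne_zero.mpr hd
  field_simp
  ring

theorem trace_lie (a b : L d) : (⁅a, b⁆ : L d).trace = 0 := by
  rw [Ring.lie_def, trace_sub, trace_mul_comm]
  ring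

theorem evalW_trace {X Y : L d} (hX : X.trace = 0) (hY : Y.trace = 0) (w : W) :
    (evalW X Y w).trace = 0 := by
  induction w with
  | x => exact hX
  | y => exact hY
  | br a b iha ihb => exact trace_lie _ _

/-- The traceless projection as a linear map. -/
noncomputable def tpLin (d : ℕ) : L d →ₗ[ℝ] L d where
  toFun M := tracelessPart d M
  map_add' M N := by
    simp only [tracelessPart, trace_add, add_div, add_smul]
    abel
  map_smul' r M := by
    simp only [tracelessPart, trace_smul, RingHom.id_apply, smul_sub, smul_smul,
      smul_eq_mul, mul_div_assoc]

theorem tpLin_apply (M : L d) : tpLin d M = tracelessPart d M := rfl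

theorem tpLin_of_traceless {M : L d} (h : M.trace = 0) : tpLin d M = M := by
  simp [tpLin, tracelessPart, h]

/-- The projection onto `sl d`. -/
noncomputable def tpProj (hd : d ≠ 0) : L d →ₗ[ℝ] ↥(sl d) :=
  LinearMap.codRestrict (sl d) (tpLin d) fun M => mem_sl.mpr (trace_tracelessPart hd M)

theorem tpProj_coe (hd : d ≠ 0) (M : L d) : (tpProj hd M : L d) = tracelessPart d M := rfl

theorem tpProj_of_traceless (hd : d ≠ 0) {M : L d} (h : M.trace = 0) :
    (tpProj hd M : L d) = M := tpLin_of_traceless h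

/-! ### Polynomial functions -/

def IsPolyFun (g : ℝ → ℝ) : Prop := ∃ p : ℝ[X], ∀ t, g t = p.eval t

theorem IsPolyFun.const (c : ℝ) : IsPolyFun fun _ => c := ⟨C c, by simp⟩

theorem IsPolyFun.add {g h : ℝ → ℝ} (hg : IsPolyFun g) (hh : IsPolyFun h) :
    IsPolyFun fun t => g t + h t := by
  obtain ⟨p, hp⟩ := hg; obtain ⟨q, hq⟩ := hh
  exact ⟨p + q, fun t => by simp [hp, hq]⟩

theorem IsPolyFun.mul {g h : ℝ → ℝ} (hg : IsPolyFun g) (hh : IsPolyFun h) :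
    IsPolyFun fun t => g t * h t := by
  obtain ⟨p, hp⟩ := hg; obtain ⟨q, hq⟩ := hh
  exact ⟨p * q, fun t => by simp [hp, hq]⟩

theorem IsPolyFun.sub {g h : ℝ → ℝ} (hg : IsPolyFun g) (hh : IsPolyFun h) :
    IsPolyFun fun t => g t - h t := by
  obtain ⟨p, hp⟩ := hg; obtain ⟨q, hq⟩ := hh
  exact ⟨p - q, fun t => by simp [hp, hq]⟩

theorem IsPolyFun.sum {ι : Type*} (s : Finset ι) (f : ι → ℝ → ℝ)
    (h : ∀ i ∈ s, IsPolyFun (f i)) : IsPolyFun fun t => ∑ i ∈ s, f i t := by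
  classical
  induction s using Finset.induction with
  | empty => simpa using IsPolyFun.const 0
  | insert a s hni ih =>
    simp only [Finset.sum_insert hni]
    exact (h a (Finset.mem_insert_self a s)).add
      (ih fun i hi => h i (Finset.mem_insert_of_mem hi))

theorem IsPolyFun.prod {ι : Type*} (s : Finset ι) (f : ι → ℝ → ℝ)
    (h : ∀ i ∈ s, IsPolyFun (f i)) : IsPolyFun fun t => ∏ i ∈ s, f i t := by
  classical
  induction s using Finset.induction with
  | empty => simpa using IsPolyFun.const 1
  | insert a s hni ih =>
    simp only [Finset.prod_insert hni]
    exact (h a (Finset.mem_insert_self a s)).mul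
      (ih fun i hi => h i (Finset.mem_insert_of_mem hi))

def MatPolyFun (g : ℝ → L d) : Prop := ∀ a b, IsPolyFun fun t => g t a b

theorem MatPolyFun.const (M : L d) : MatPolyFun fun _ => M :=
  fun _ _ => IsPolyFun.const _

theorem MatPolyFun.affine (M N : L d) : MatPolyFun fun t => M + t • N := by
  intro a b
  refine ⟨C (M a b) + X * C (N a b), fun t => ?_⟩
  simp only [Matrix.add_apply, Matrix.smul_apply, smul_eq_mul, eval_add, eval_mul, eval_C,
    eval_X]

theorem MatPolyFun.mul {g h : ℝ → L d} (hg : MatPolyFun g) (hh : MatPolyFun h) :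
    MatPolyFun fun t => g t * h t := by
  intro a b
  have : ∀ t, (g t * h t) a b = ∑ k, g t a k * h t k b := fun t => Matrix.mul_apply
  simp only [this]
  exact IsPolyFun.sum _ _ fun k _ => (hg a k).mul (hh k b)

theorem MatPolyFun.sub {g h : ℝ → L d} (hg : MatPolyFun g) (hh : MatPolyFun h) :
    MatPolyFun fun t => g t - h t := fun a b => by
  simpa [Matrix.sub_apply] using (hg a b).sub (hh a b)

theorem MatPolyFun.lie {g h : ℝ → L d} (hg : MatPolyFun g) (hh : MatPolyFun h) :
    MatPolyFun fun t => ⁅g t, h t⁆ := by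
  simp only [Ring.lie_def]
  exact (hg.mul hh).sub (hh.mul hg)

theorem IsPolyFun.of_linearMap (ℓ : L d →ₗ[ℝ] ℝ) {g : ℝ → L d} (hg : MatPolyFun g) :
    IsPolyFun fun t => ℓ (g t) := by
  have key : ∀ t, ℓ (g t) = ∑ a, ∑ b, g t a b * ℓ (Matrix.single a b 1) := by
    intro t
    conv_lhs => rw [matrix_eq_sum_single (g t)]
    rw [map_sum]
    refine Finset.sum_congr rfl fun a _ => ?_
    rw [map_sum]
    refine Finset.sum_congr rfl fun b _ => ?_
    rw [show Matrix.single a b (g t a b) = g t a b • Matrix.single a b 1 by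
      rw [Matrix.smul_single, smul_eq_mul, mul_one], _root_.map_smul, smul_eq_mul]
  simp only [key]
  exact IsPolyFun.sum _ _ fun a _ => IsPolyFun.sum _ _ fun b _ =>
    (hg a b).mul (IsPolyFun.const _)

theorem IsPolyFun.det {ι : Type*} [Fintype ι] [DecidableEq ι]
    (g : ℝ → Matrix ι ι ℝ) (hg : ∀ a b, IsPolyFun fun t => g t a b) :
    IsPolyFun fun t => (g t).det := by
  simp only [Matrix.det_apply']
  exact IsPolyFun.sum _ _ fun σ _ =>
    (IsPolyFun.const _).mul (IsPolyFun.prod _ _ fun i _ => hg (σ i) i)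

theorem evalW_matPolyFun (X Y₀ Y₁ : L d) (w : W) :
    MatPolyFun fun t => evalW X (Y₀ + t • Y₁) w := by
  induction w with
  | x => exact MatPolyFun.const X
  | y => exact MatPolyFun.affine Y₀ Y₁
  | br a b iha ihb => exact iha.lie ihb

/-! ### The span characterization -/

theorem memLARC0_iff (hd : d ≠ 0) (A : L d) (B : Matrix (Fin d) (Fin m) ℝ)
    (K : Matrix (Fin m) (Fin d) ℝ) :
    MemLARC0 A B K ↔
      span ℝ (Set.range (evalW (tracelessPart d A) (tracelessPart d (B * K)))) = sl d := by
  constructor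
  · intro h
    ext M
    rw [← lieSpan_eq_span, mem_sl]
    exact h M
  · intro h M
    rw [lieSpan_eq_span, h, mem_sl]

end LARCAux

open LARCAux

/-- If `Lie(A - (Tr A/d)Id, BK₀ - (Tr(BK₀)/d)Id) = sl(d,ℝ)` for some `K₀`, then the set of
`K` with this property is dense in `M_{m,d}(ℝ)`. -/
theorem LARC0_dense (A : Matrix (Fin d) (Fin d) ℝ) (B : Matrix (Fin d) (Fin m) ℝ)
    (K₀ : Matrix (Fin m) (Fin d) ℝ) (hK₀ : MemLARC0 A B K₀) :
    Dense {K : Matrix (Fin m) (Fin d) ℝ | MemLARC0 A B K} := by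
  classical
  rcases Nat.eq_zero_or_pos d with hd | hdpos
  · subst hd
    have : {K : Matrix (Fin m) (Fin 0) ℝ | MemLARC0 A B K} = Set.univ := by
      ext K
      simp only [Set.mem_setOf_eq, Set.mem_univ, iff_true]
      intro M
      have hM : M = 0 := by ext i j; exact i.elim0
      subst hM
      simp only [zero_mem, true_iff]
      simp [Matrix.trace]
    rw [this]; exact dense_univ
  have hd : d ≠ 0 := Nat.pos_iff_ne_zero.mp hdpos
  set X : L d := tracelessPart d A with hX
  have hXtr : X.trace = 0 := trace_tracelessPart hd A
  have hYtr : ∀ K : Matrix (Fin m) (Fin d) ℝ, (tracelessPart d (B * K)).trace = 0 :=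
    fun K => trace_tracelessPart hd _
  -- the span at K₀ equals sl d
  have hspan₀ : span ℝ (Set.range (evalW X (tracelessPart d (B * K₀)))) = sl d :=
    (memLARC0_iff hd A B K₀).mp hK₀
  -- extract a finite linearly independent spanning subset
  obtain ⟨s, hs_sub, hs_span, hs_ind⟩ :=
    exists_linearIndependent ℝ (Set.range (evalW X (tracelessPart d (B * K₀))))
  rw [hspan₀] at hs_span
  have hs_fin : s.Finite := hs_ind.setFinite
  haveI : Fintype s := hs_fin.fintype
  -- choose words
  have hws : ∀ e : s, ∃ w : W, evalW X (tracelessPart d (B * K₀)) w = e :=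
    fun e => hs_sub e.2
  choose w hw using hws
  -- s ⊆ sl d
  have hs_sl : ∀ e : s, (e : L d) ∈ sl d := fun e => hs_span ▸ subset_span e.2
  -- basis of sl d from s
  have u_ind : LinearIndependent ℝ fun e : s => (⟨e, hs_sl e⟩ : ↥(sl d)) := by
    apply LinearIndependent.of_comp (sl d).subtype
    exact hs_ind
  have u_span : span ℝ (Set.range fun e : s => (⟨e, hs_sl e⟩ : ↥(sl d))) = ⊤ := by
    apply Submodule.map_injective_of_injective (sl d).injective_subtype
    rw [Submodule.map_span, Submodule.map_top, Submodule.range_subtype]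
    have himg : (sl d).subtype '' Set.range (fun e : s => (⟨e, hs_sl e⟩ : ↥(sl d))) = s := by
      ext z
      constructor
      · rintro ⟨-, ⟨e, rfl⟩, rfl⟩; exact e.2
      · intro hz; exact ⟨⟨z, hs_sl ⟨z, hz⟩⟩, ⟨⟨z, hz⟩, rfl⟩, rfl⟩
    rw [himg, hs_span]
  let bS : Module.Basis s ℝ ↥(sl d) := Module.Basis.mk u_ind u_span.ge
  have bS_apply : ∀ e : s, bS e = (⟨e, hs_sl e⟩ : ↥(sl d)) := fun e => Module.Basis.mk_apply _ _ e
  -- the determinant function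
  let v : Matrix (Fin m) (Fin d) ℝ → s → L d :=
    fun K j => evalW X (tracelessPart d (B * K)) (w j)
  have hv_tr : ∀ K j, (v K j).trace = 0 := fun K j => evalW_trace hXtr (hYtr K) _
  let f : Matrix (Fin m) (Fin d) ℝ → ℝ :=
    fun K => bS.det fun j => tpProj hd (v K j)
  -- f K₀ = 1
  have hvK₀ : ∀ j : s, tpProj hd (v K₀ j) = bS j := by
    intro j
    apply Subtype.ext
    rw [bS_apply]
    show (tpProj hd (v K₀ j) : L d) = (j : L d)
    rw [tpProj_of_traceless hd (hv_tr K₀ j)]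
    show evalW X (tracelessPart d (B * K₀)) (w j) = (j : L d)
    exact hw j
  have hfK₀ : f K₀ = 1 := by
    show bS.det (fun j => tpProj hd (v K₀ j)) = 1
    have : (fun j => tpProj hd (v K₀ j)) = bS := by
      funext j; exact hvK₀ j
    rw [this]
    exact bS.det_self
  -- f K ≠ 0 → MemLARC0
  have hf_mem : ∀ K, f K ≠ 0 → MemLARC0 A B K := by
    intro K hfK
    rw [memLARC0_iff hd]
    have hunit : IsUnit (bS.det fun j => tpProj hd (v K j)) :=
      isUnit_iff_ne_zero.mpr hfK
    obtain ⟨-, htop⟩ := (Module.Basis.is_basis_iff_det bS).mpr hunit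
    apply le_antisymm
    · rw [span_le]
      rintro z ⟨wz, rfl⟩
      exact mem_sl.mpr (evalW_trace hXtr (hYtr K) wz)
    · -- sl d ≤ span
      intro z hz
      have himg : Submodule.map (sl d).subtype
          (span ℝ (Set.range fun j => tpProj hd (v K j)))
          = span ℝ (Set.range fun j => v K j) := by
        rw [Submodule.map_span]
        congr 1
        ext y
        constructor
        · rintro ⟨-, ⟨j, rfl⟩, rfl⟩
          exact ⟨j, (tpProj_of_traceless hd (hv_tr K j)).symm⟩
        · rintro ⟨j, rfl⟩
          exact ⟨tpProj hd (v K j), ⟨j, rfl⟩, tpProj_of_traceless hd (hv_tr K j)⟩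
      have hmap : span ℝ (Set.range fun j => v K j) = sl d := by
        rw [← himg, htop, Submodule.map_top, Submodule.range_subtype]
      have hle : span ℝ (Set.range fun j => v K j) ≤
          span ℝ (Set.range (evalW X (tracelessPart d (B * K)))) := by
        apply span_mono
        rintro y ⟨j, rfl⟩
        exact ⟨w j, rfl⟩
      exact hle (hmap ▸ hz)
  -- f along lines is polynomial
  have hf_line : ∀ (Kb Δ : Matrix (Fin m) (Fin d) ℝ),
      IsPolyFun fun t => f (Kb + t • Δ) := by
    intro Kb Δ
    have hYline : ∀ t : ℝ, tracelessPart d (B * (Kb + t • Δ)) =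
        tracelessPart d (B * Kb) + t • tracelessPart d (B * Δ) := by
      intro t
      have : B * (Kb + t • Δ) = B * Kb + t • (B * Δ) := by
        rw [Matrix.mul_add, Matrix.mul_smul]
      rw [← tpLin_apply, this, map_add]
      rw [show (tpLin d) (t • (B * Δ)) = t • tpLin d (B * Δ) from (tpLin d).map_smul t (B * Δ)]
      rfl
    have hentry : ∀ (i j : s), IsPolyFun fun t =>
        bS.repr (tpProj hd (v (Kb + t • Δ) j)) i := by
      intro i j
      have : ∀ t : ℝ, bS.repr (tpProj hd (v (Kb + t • Δ) j)) i =
          ((bS.coord i).comp (tpProj hd))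
            (evalW X (tracelessPart d (B * Kb) + t • tracelessPart d (B * Δ)) (w j)) := by
        intro t
        simp only [LinearMap.comp_apply, Module.Basis.coord_apply]
        have hv : v (Kb + t • Δ) j
            = evalW X (tracelessPart d (B * Kb) + t • tracelessPart d (B * Δ)) (w j) := by
          show evalW X (tracelessPart d (B * (Kb + t • Δ))) (w j) = _
          rw [hYline t]
        rw [hv]
      simp only [this]
      exact IsPolyFun.of_linearMap _ (evalW_matPolyFun X _ _ (w j))
    have : ∀ t : ℝ, f (Kb + t • Δ) =
        (Matrix.of fun i j : s => bS.repr (tpProj hd (v (Kb + t • Δ) j)) i).det := by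
      intro t
      show bS.det _ = _
      rw [Module.Basis.det_apply]
      rfl
    simp only [this]
    exact IsPolyFun.det _ fun i j => hentry i j
  -- density
  rw [dense_iff_inter_open]
  rintro U hU ⟨K, hKU⟩
  set c : ℝ → Matrix (Fin m) (Fin d) ℝ := fun t => K + t • (K₀ - K) with hc
  have hc_cont : Continuous c := by
    apply continuous_pi; intro a; apply continuous_pi; intro b
    simp only [hc]
    have : (fun t => (K + t • (K₀ - K)) a b) = fun t => K a b + t * (K₀ - K) a b := by
      funext t; simp [Matrix.add_apply, Matrix.smul_apply, smul_eq_mul]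
    rw [this]
    exact continuous_const.add (continuous_id.mul continuous_const)
  have hc0 : c 0 = K := by simp [hc]
  have hc1 : c 1 = K₀ := by simp [hc]
  obtain ⟨q, hq⟩ := hf_line K (K₀ - K)
  have hq1 : q.eval 1 = 1 := by rw [← hq 1]; show f (c 1) = 1; rw [hc1]; exact hfK₀
  have hqne : q ≠ 0 := fun h => by simp [h] at hq1
  have hroots : {t : ℝ | q.IsRoot t}.Finite := Polynomial.finite_setOf_isRoot hqne
  have hopen : IsOpen (c ⁻¹' U) := hU.preimage hc_cont
  have h0mem : (0 : ℝ) ∈ c ⁻¹' U := by rw [Set.mem_preimage, hc0]; exact hKU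
  obtain ⟨ε, hε, hball⟩ := Metric.isOpen_iff.mp hopen 0 h0mem
  have hIoo : Set.Ioo (-ε) ε ⊆ c ⁻¹' U := by
    intro t ht
    apply hball
    rw [Metric.mem_ball, Real.dist_eq, sub_zero]
    rw [Set.mem_Ioo] at ht
    exact abs_lt.mpr ⟨ht.1, ht.2⟩
  have hlt : (-ε) < ε := by linarith
  have hinf : (Set.Ioo (-ε) ε).Infinite := Set.Ioo_infinite hlt
  obtain ⟨t, htI, htroot⟩ := (hinf.diff hroots).nonempty
  refine ⟨c t, hIoo htI, ?_⟩
  apply hf_mem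
  rw [show f (c t) = q.eval t from hq t]
  exact htroot


end
end

section
/- Single-input Lie bracket generation for the Jordan block: for the pair (J_d, e_d), every row vector K = (k₁,...,k_d) with all entries k_i ≠ 0 satisfies Lie(J_d, e_d·K) = M_d(ℝ), i.e., the Lie algebra generated by the nilpotent Jordan block J_d and the rank-one matrix e_d·K is all of gl(d,ℝ). -/
open Matrix

namespace LieJordanAux

variable {d : ℕ}

/-- Matrix whose row `i` (as a natural number index) is `v`, all other rows zero. -/
def Mrow (i : ℕ) (v : Fin d → ℝ) : Matrix (Fin d) (Fin d) ℝ :=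
  Matrix.of fun a b => if (a : ℕ) = i then v b else 0

def Jmat (d : ℕ) : Matrix (Fin d) (Fin d) ℝ :=
  Matrix.of fun i j => if (j : ℕ) = (i : ℕ) + 1 then (1 : ℝ) else 0

def Kex (K : Fin d → ℝ) (n : ℕ) : ℝ := if h : n < d then K ⟨n, h⟩ else 0

def w (K : Fin d → ℝ) (l : ℕ) : Fin d → ℝ :=
  fun b => if l ≤ (b : ℕ) then Kex K ((b : ℕ) - l) else 0

lemma sum_ite_coe (n : ℕ) (hn : n < d) (f : Fin d → ℝ) :
    (∑ c : Fin d, if (c : ℕ) = n then f c else 0) = f ⟨n, hn⟩ := by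
  simp_rw [show ∀ c : Fin d, ((c : ℕ) = n) = (c = ⟨n, hn⟩) from fun c => by
    simp [Fin.ext_iff]]
  simp

lemma sum_ite_coe_ge (n : ℕ) (hn : d ≤ n) (f : Fin d → ℝ) :
    (∑ c : Fin d, if (c : ℕ) = n then f c else 0) = 0 := by
  apply Finset.sum_eq_zero
  intro c _
  have := c.isLt
  rw [if_neg (by omega)]

lemma Jmat_mul_Mrow (i : ℕ) (hi : i + 1 < d) (v : Fin d → ℝ) :
    Jmat d * Mrow (i + 1) v = Mrow i v := by
  ext a b
  simp only [Jmat, Mrow, Matrix.mul_apply, Matrix.of_apply]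
  have : ∀ c : Fin d, (if (c : ℕ) = (a : ℕ) + 1 then (1:ℝ) else 0) *
      (if (c : ℕ) = i + 1 then v b else 0)
      = if (c : ℕ) = (a:ℕ) + 1 then (if (a:ℕ) = i then v b else 0) else 0 := by
    intro c
    by_cases h1 : (c : ℕ) = (a : ℕ) + 1 <;> by_cases h2 : (c : ℕ) = i + 1
    · simp [h1, h2, show (a : ℕ) = i by omega]
    · simp [h1, h2, show (a : ℕ) ≠ i by omega]
    · simp [h1, h2, show ¬ i = (a : ℕ) by omega]
    · simp [h1, h2]
  simp_rw [this]
  by_cases ha : (a : ℕ) + 1 < d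
  · rw [sum_ite_coe _ ha]
  · rw [sum_ite_coe_ge _ (by omega)]
    have := a.isLt
    rw [if_neg (by omega)]

lemma Jmat_mul_Mrow_zero (v : Fin d → ℝ) : Jmat d * Mrow 0 v = 0 := by
  ext a b
  simp only [Jmat, Mrow, Matrix.mul_apply, Matrix.of_apply, Matrix.zero_apply]
  apply Finset.sum_eq_zero
  intro c _
  by_cases h1 : (c : ℕ) = (a : ℕ) + 1 <;> by_cases h2 : (c : ℕ) = 0 <;>
    simp [h1, h2] <;> omega

def shift (v : Fin d → ℝ) : Fin d → ℝ :=
  fun b => if h : 1 ≤ (b : ℕ) then v ⟨(b : ℕ) - 1, Nat.lt_of_le_of_lt (Nat.sub_le _ _) b.isLt⟩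
  else 0

lemma Mrow_mul_Jmat (p : ℕ) (v : Fin d → ℝ) :
    Mrow p v * Jmat d = Mrow p (shift v) := by
  ext a b
  simp only [Jmat, Mrow, Matrix.mul_apply, Matrix.of_apply, shift]
  have : ∀ c : Fin d, (if (a : ℕ) = p then v c else 0) *
      (if (b : ℕ) = (c : ℕ) + 1 then (1:ℝ) else 0)
      = if (c : ℕ) = (b : ℕ) - 1 ∧ 1 ≤ (b:ℕ) then (if (a:ℕ) = p then v c else 0) else 0 := by
    intro c
    by_cases h3 : (c : ℕ) = (b : ℕ) - 1 ∧ 1 ≤ (b : ℕ)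
    · rw [if_pos h3, if_pos (show (b : ℕ) = (c : ℕ) + 1 by omega), mul_one]
    · rw [if_neg (show ¬ (b:ℕ) = (c:ℕ) + 1 by omega), mul_zero, if_neg h3]
  simp_rw [this]
  by_cases hb : 1 ≤ (b : ℕ)
  · simp only [hb, and_true]
    have hlt : (b : ℕ) - 1 < d := Nat.lt_of_le_of_lt (Nat.sub_le _ _) b.isLt
    rw [sum_ite_coe _ hlt]
    simp
  · simp only [hb, and_false, if_false, Finset.sum_const_zero]
    simp

lemma shift_w (K : Fin d → ℝ) (l : ℕ) : shift (w K l) = w K (l + 1) := by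
  funext b
  simp only [shift, w]
  by_cases hb : 1 ≤ (b : ℕ)
  · simp only [hb, dif_pos]
    by_cases hl : l + 1 ≤ (b : ℕ)
    · rw [if_pos (by omega), if_pos hl]
      congr 1
      omega
    · rw [if_neg (by omega), if_neg hl]
  · rw [dif_neg hb, if_neg (by omega)]

lemma Mrow_mul_Mrow (p q : ℕ) (hq : q < d) (v u : Fin d → ℝ) :
    Mrow p v * Mrow q u = v ⟨q, hq⟩ • Mrow p u := by
  ext a b
  simp only [Mrow, Matrix.mul_apply, Matrix.of_apply, Matrix.smul_apply, smul_eq_mul]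
  have : ∀ c : Fin d, (if (a : ℕ) = p then v c else 0) * (if (c : ℕ) = q then u b else 0)
      = if (c : ℕ) = q then (if (a:ℕ) = p then v c * u b else 0) else 0 := by
    intro c
    by_cases h1 : (a : ℕ) = p <;> by_cases h2 : (c : ℕ) = q <;> simp [h1, h2]
  simp_rw [this]
  rw [sum_ite_coe _ hq]
  by_cases h1 : (a : ℕ) = p <;> simp [h1]

end LieJordanAux

open Matrix

namespace LieJordanAux

variable {d : ℕ}

def MrowL (i : ℕ) : (Fin d → ℝ) →ₗ[ℝ] Matrix (Fin d) (Fin d) ℝ where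
  toFun := Mrow i
  map_add' u v := by
    ext a b
    simp only [Mrow, Matrix.of_apply, Matrix.add_apply, Pi.add_apply]
    split <;> simp
  map_smul' c v := by
    ext a b
    simp only [Mrow, Matrix.of_apply, Matrix.smul_apply, Pi.smul_apply, RingHom.id_apply,
      smul_eq_mul]
    split <;> simp

end LieJordanAux

open LieJordanAux

attribute [local instance 100] LieRing.ofAssociativeRing

/-- Single-input Lie bracket generation for the Jordan block: if all the entries of the row
vector `K` are nonzero, then the Lie algebra generated by the nilpotent Jordan block `J_d`
and the rank-one matrix `e_d K` is all of `gl(d,ℝ)`. -/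
theorem lie_span_jordan_rankOne {d : ℕ} (K : Fin d → ℝ) (hK : ∀ j, K j ≠ 0)
    (Jd E : Matrix (Fin d) (Fin d) ℝ)
    (hJ : Jd = Matrix.of fun i j : Fin d => if (j : ℕ) = (i : ℕ) + 1 then (1 : ℝ) else 0)
    (hE : E = Matrix.of fun i j : Fin d => if (i : ℕ) = d - 1 then K j else 0) :
    LieSubalgebra.lieSpan ℝ (Matrix (Fin d) (Fin d) ℝ) {Jd, E} = ⊤ := by
  set L := LieSubalgebra.lieSpan ℝ (Matrix (Fin d) (Fin d) ℝ) {Jd, E} with hL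
  rcases Nat.eq_zero_or_pos d with hd | hd
  · subst hd
    rw [eq_top_iff]
    intro A _
    have hA : A = 0 := by ext a b; exact absurd a.isLt (by omega)
    rw [hA]
    exact L.zero_mem
  have hJ' : Jd = Jmat d := hJ
  have hE' : E = Mrow (d - 1) (w K 0) := by
    rw [hE]
    ext a b
    have hb := b.isLt
    simp [Mrow, w, Kex, hb]
  have hJmem : Jd ∈ L := LieSubalgebra.subset_lieSpan (Set.mem_insert _ _)
  have hEmem : E ∈ L := LieSubalgebra.subset_lieSpan (Set.mem_insert_iff.2 (Or.inr rfl))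
  -- Step A : matrices with row vector `w K 0` at any row index
  have stepA : ∀ k : ℕ, ∀ i : ℕ, i < d → d - 1 - i ≤ k → Mrow i (w K 0) ∈ L := by
    intro k
    induction k with
    | zero =>
      intro i hi h0
      have hieq : i = d - 1 := by omega
      rw [hieq, ← hE']
      exact hEmem
    | succ k ih =>
      intro i hi h0
      by_cases hik : d - 1 - i ≤ k
      · exact ih i hi hik
      have hi1 : i + 1 < d := by omega
      have hX : Mrow (i + 1) (w K 0) ∈ L := ih (i + 1) hi1 (by omega)
      have hB : ⁅Jd, Mrow (i + 1) (w K 0)⁆ = Mrow i (w K 0) - Mrow (i + 1) (w K 1) := by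
        rw [Ring.lie_def, hJ', Jmat_mul_Mrow i hi1, Mrow_mul_Jmat, shift_w]
      have hc1 : w K 0 ⟨i + 1, hi1⟩ ≠ 0 := by
        simp only [w, Kex, Nat.zero_le, if_true, Nat.sub_zero, hi1, dif_pos]
        exact hK _
      have hw1 : w K 1 ⟨i + 1, hi1⟩ = w K 0 ⟨i, hi⟩ := by
        simp [w, Kex]
      have hC : ⁅Mrow (i + 1) (w K 0), ⁅Jd, Mrow (i + 1) (w K 0)⁆⁆ =
          (2 * w K 0 ⟨i, hi⟩) • Mrow (i + 1) (w K 0)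
            - w K 0 ⟨i + 1, hi1⟩ • Mrow i (w K 0)
            - w K 0 ⟨i + 1, hi1⟩ • Mrow (i + 1) (w K 1) := by
        rw [hB, Ring.lie_def, mul_sub, sub_mul,
          Mrow_mul_Mrow (i + 1) i hi (w K 0) (w K 0),
          Mrow_mul_Mrow (i + 1) (i + 1) hi1 (w K 0) (w K 1),
          Mrow_mul_Mrow i (i + 1) hi1 (w K 0) (w K 0),
          Mrow_mul_Mrow (i + 1) (i + 1) hi1 (w K 1) (w K 0), hw1]
        module
      have hkey : Mrow i (w K 0) = (2 * w K 0 ⟨i + 1, hi1⟩)⁻¹ •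
          (w K 0 ⟨i + 1, hi1⟩ • ⁅Jd, Mrow (i + 1) (w K 0)⁆
            - ⁅Mrow (i + 1) (w K 0), ⁅Jd, Mrow (i + 1) (w K 0)⁆⁆
            + (2 * w K 0 ⟨i, hi⟩) • Mrow (i + 1) (w K 0)) := by
        rw [hC, hB]
        match_scalars <;> field_simp <;> ring
      rw [hkey]
      exact L.smul_mem _ (L.add_mem (L.sub_mem (L.smul_mem _ (L.lie_mem hJmem hX))
        (L.lie_mem hX (L.lie_mem hJmem hX))) (L.smul_mem _ hX))
  -- Step B : all shifts at row 0
  have stepB : ∀ l : ℕ, Mrow 0 (w K l) ∈ L := by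
    intro l
    induction l with
    | zero => exact stepA (d - 1) 0 hd (le_refl _)
    | succ l ih =>
      have h : ⁅Jd, Mrow 0 (w K l)⁆ = -Mrow 0 (w K (l + 1)) := by
        rw [Ring.lie_def, hJ', Jmat_mul_Mrow_zero, Mrow_mul_Jmat, shift_w, zero_sub]
      have hm := L.lie_mem hJmem ih
      rw [h] at hm
      simpa using L.neg_mem hm
  -- Step C : all shifts at all rows
  have hK0 : w K 0 ⟨0, hd⟩ ≠ 0 := by
    simp only [w, Kex, le_refl, if_true, Nat.sub_zero, hd, dif_pos]
    exact hK _
  have stepC : ∀ i : ℕ, i < d → ∀ l : ℕ, Mrow i (w K l) ∈ L := by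
    intro i hi l
    have h1 : Mrow i (w K 0) ∈ L := stepA (d - 1) i hi (by omega)
    have h2 : Mrow 0 (w K l) ∈ L := stepB l
    have hbr : ⁅Mrow i (w K 0), Mrow 0 (w K l)⁆ =
        w K 0 ⟨0, hd⟩ • Mrow i (w K l) - w K l ⟨i, hi⟩ • Mrow 0 (w K 0) := by
      rw [Ring.lie_def, Mrow_mul_Mrow i 0 hd (w K 0) (w K l),
        Mrow_mul_Mrow 0 i hi (w K l) (w K 0)]
    have hkey : Mrow i (w K l) = (w K 0 ⟨0, hd⟩)⁻¹ •
        (⁅Mrow i (w K 0), Mrow 0 (w K l)⁆ + w K l ⟨i, hi⟩ • Mrow 0 (w K 0)) := by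
      rw [hbr]
      match_scalars <;> field_simp <;> ring
    rw [hkey]
    exact L.smul_mem _ (L.add_mem (L.lie_mem h1 h2) (L.smul_mem _ (stepB 0)))
  -- Step D : any row vector at any row
  set W : Matrix (Fin d) (Fin d) ℝ := Matrix.of fun l b : Fin d => w K (l : ℕ) b with hW
  have hWtri : W.BlockTriangular id := by
    intro l b hlb
    have hlb' : (b : ℕ) < (l : ℕ) := hlb
    simp only [hW, Matrix.of_apply, w]
    rw [if_neg (by omega)]
  have hWdet : IsUnit W.det := by
    rw [Matrix.det_of_upperTriangular hWtri]
    apply isUnit_iff_ne_zero.2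
    apply Finset.prod_ne_zero_iff.2
    intro l _
    have : W l l = K ⟨0, hd⟩ := by
      simp [hW, w, Kex, hd]
    rw [this]
    exact hK _
  have stepD : ∀ i : ℕ, i < d → ∀ v : Fin d → ℝ, Mrow i v ∈ L := by
    intro i hi v
    set c := Matrix.vecMul v W⁻¹ with hc
    have hv : v = ∑ l : Fin d, c l • w K (l : ℕ) := by
      have h1 : v = Matrix.vecMul c W := by
        rw [hc, Matrix.vecMul_vecMul, Matrix.nonsing_inv_mul W hWdet, Matrix.vecMul_one]
      funext b
      rw [h1]
      simp only [Matrix.vecMul, dotProduct, Finset.sum_apply, Pi.smul_apply,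
        smul_eq_mul, hW, Matrix.of_apply]
    have hMv : Mrow i v = ∑ l : Fin d, c l • Mrow i (w K (l : ℕ)) := by
      calc Mrow i v = MrowL i v := rfl
        _ = ∑ l : Fin d, c l • MrowL i (w K (l : ℕ)) := by
            rw [hv, map_sum]
            simp_rw [_root_.map_smul]
        _ = ∑ l : Fin d, c l • Mrow i (w K (l : ℕ)) := rfl
    rw [hMv]
    exact Submodule.sum_mem L.toSubmodule fun l _ =>
      Submodule.smul_mem L.toSubmodule _ (stepC i hi (l : ℕ))
  -- Conclusion
  rw [eq_top_iff]
  intro A _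
  have hA : A = ∑ i : Fin d, Mrow (i : ℕ) (A i) := by
    ext a b
    rw [Matrix.sum_apply]
    simp only [Mrow, Matrix.of_apply]
    have hsw : ∀ i : Fin d, (if (a : ℕ) = (i : ℕ) then A i b else 0) =
        (if (i : ℕ) = (a : ℕ) then A i b else 0) := by
      intro i
      by_cases h : (a : ℕ) = (i : ℕ)
      · simp [h]
      · rw [if_neg h, if_neg fun hh => h hh.symm]
    simp_rw [hsw]
    rw [sum_ite_coe (a : ℕ) a.isLt (fun i => A i b)]
  rw [hA]
  exact Submodule.sum_mem L.toSubmodule fun i _ =>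
    stepD (i : ℕ) i.isLt (A i)
end
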